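/- Let G be a group, let A, B ≤ G be subgroups, let φ: B → A be a group isomorphism, and suppose there exists a group homomorphism π: G → A × B with π(a) = (a,1) for all a ∈ A and π(b) = (1,b) for all b ∈ B. Form the amalgamated free product G *_φ G of two copies of G obtained by identifying the subgroup B of the first copy with the subgroup A of the second copy via φ. Then there exist a surjective homomorphism ρ: G *_φ G → A * B and an injective homomorphism s: A * B → G *_φ G with ρ ∘ s = id; in particular G *_φ G is an internal semidirect product (A * B) ⋉ ker ρ. -/

import Mathlib

universe u

section Amalgam

variable {G₁ : Type u} {G₂ : Type u} [Group G₁] [Group G₂]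

/-- The relators identifying `H₁ ≤ G₁` with `H₂ ≤ G₂` via `φ` inside the free product. -/
def amalRels (H₁ : Subgroup G₁) (H₂ : Subgroup G₂) (φ : H₁ ≃* H₂) :
    Set (Monoid.Coprod G₁ G₂) :=
  ⋃ h : H₁, {Monoid.Coprod.inl (h : G₁) *
    (Monoid.Coprod.inr ((φ h : G₂)) : Monoid.Coprod G₁ G₂)⁻¹}

/-- The amalgamated free product `G₁ ∗_φ G₂`: the quotient of the free product `G₁ ∗ G₂` by
the normal closure of `{h · φ(h)⁻¹ : h ∈ H₁}`. -/
def Amal (H₁ : Subgroup G₁) (H₂ : Subgroup G₂) (φ : H₁ ≃* H₂) : Type u :=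
  Monoid.Coprod G₁ G₂ ⧸ Subgroup.normalClosure (amalRels H₁ H₂ φ)

instance (H₁ : Subgroup G₁) (H₂ : Subgroup G₂) (φ : H₁ ≃* H₂) : Group (Amal H₁ H₂ φ) :=
  inferInstanceAs (Group (Monoid.Coprod G₁ G₂ ⧸ Subgroup.normalClosure (amalRels H₁ H₂ φ)))

end Amalgam

/-- **Lemma.** Suppose `φ : B → A` is an isomorphism of subgroups of `G` and there is a
homomorphism `π : G → A × B` with `π(a) = (a,1)` for `a ∈ A` and `π(b) = (1,b)` for `b ∈ B`.
Then `G ∗_φ G` (identifying `B` in the first copy with `A` in the second via `φ`) splits as an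
internal semidirect product `(A ∗ B) ⋉ ker ρ`: there is a surjection `ρ : G ∗_φ G → A ∗ B`
split by an injection `s : A ∗ B → G ∗_φ G`. -/
theorem amalgam_splits_over_free_product {G : Type u} [Group G]
    (A B : Subgroup G) (φ : B ≃* A) (π : G →* A × B)
    (hπA : ∀ a : A, π (a : G) = (a, 1)) (hπB : ∀ b : B, π (b : G) = (1, b)) :
    ∃ (ρ : Amal B A φ →* Monoid.Coprod A B) (s : Monoid.Coprod A B →* Amal B A φ),
      Function.Surjective ρ ∧ Function.Injective s ∧
      ρ.comp s = MonoidHom.id (Monoid.Coprod A B) ∧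
      ∀ x : Amal B A φ, ∃ (w : Monoid.Coprod A B) (y : ρ.ker), x = s w * (y : Amal B A φ) := by
  set N := Subgroup.normalClosure (amalRels B A φ) with hN
  set f : Monoid.Coprod G G →* Monoid.Coprod A B :=
    Monoid.Coprod.lift (Monoid.Coprod.inl.comp ((MonoidHom.fst A B).comp π))
      (Monoid.Coprod.inr.comp ((MonoidHom.snd A B).comp π)) with hf
  have hker : N ≤ f.ker := by
    apply Subgroup.normalClosure_le_normal
    rintro x hx
    simp only [amalRels, Set.mem_iUnion, Set.mem_singleton_iff] at hx
    obtain ⟨b, rfl⟩ := hx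
    rw [SetLike.mem_coe, MonoidHom.mem_ker, map_mul, map_inv, hf,
      Monoid.Coprod.lift_apply_inl, Monoid.Coprod.lift_apply_inr]
    simp only [MonoidHom.comp_apply]
    rw [hπB b, hπA (φ b)]
    simp
  set ρ : Amal B A φ →* Monoid.Coprod A B := QuotientGroup.lift N f hker with hρ
  set s : Monoid.Coprod A B →* Amal B A φ :=
    Monoid.Coprod.lift
      ((QuotientGroup.mk' N).comp (Monoid.Coprod.inl.comp A.subtype))
      ((QuotientGroup.mk' N).comp (Monoid.Coprod.inr.comp B.subtype)) with hs
  have hcomp : ρ.comp s = MonoidHom.id (Monoid.Coprod A B) := by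
    apply Monoid.Coprod.hom_ext
    · ext x
      show ρ (s (Monoid.Coprod.inl x)) = Monoid.Coprod.inl x
      rw [hs]; erw [Monoid.Coprod.lift_apply_inl (M := A) (N := B) (P := Amal B A φ) ((QuotientGroup.mk' N).comp (Monoid.Coprod.inl.comp A.subtype))]
      show ρ (QuotientGroup.mk (Monoid.Coprod.inl (x : G))) = Monoid.Coprod.inl x
      erw [hρ, QuotientGroup.lift_mk, hf, Monoid.Coprod.lift_apply_inl]
      simp only [MonoidHom.comp_apply]
      rw [hπA x]; rfl
    · ext x
      show ρ (s (Monoid.Coprod.inr x)) = Monoid.Coprod.inr x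
      rw [hs]; erw [Monoid.Coprod.lift_apply_inr (M := A) (N := B) (P := Amal B A φ) _ ((QuotientGroup.mk' N).comp (Monoid.Coprod.inr.comp B.subtype))]
      show ρ (QuotientGroup.mk (Monoid.Coprod.inr (x : G))) = Monoid.Coprod.inr x
      erw [hρ, QuotientGroup.lift_mk, hf, Monoid.Coprod.lift_apply_inr]
      simp only [MonoidHom.comp_apply]
      rw [hπB x]; rfl
  have hpt : ∀ w, ρ (s w) = w := fun w => congrFun (congrArg DFunLike.coe hcomp) w
  refine ⟨ρ, s, fun w => ⟨s w, hpt w⟩, ?_, hcomp, ?_⟩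
  · intro u v huv
    have h := hpt u
    rw [huv, hpt v] at h
    exact h.symm
  · intro x
    refine ⟨ρ x, ⟨(s (ρ x))⁻¹ * x, ?_⟩, by group⟩
    simp [MonoidHom.mem_ker, hpt]
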